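/- Let γ ≥ 1, l ≥ 1, m ≥ 2, n = l+m, and let w_1, …, w_{2γ+1} be positive integers with w_2 + w_4 + ⋯ + w_{2γ} = l and w_1 + w_3 + ⋯ + w_{2γ+1} = m. Then the alternating block product Q^{w_1} P^{w_2} Q^{w_3} ⋯ P^{w_{2γ}} Q^{w_{2γ+1}} equals (1/√2)^{n-1} · (-1)^{m+γ+1} · Q. -/
import Mathlib


noncomputable section
open Matrix Finset

/-- `P = (1/√2)·[[1,1],[0,0]]` -/
def matP : Matrix (Fin 2) (Fin 2) ℂ := (Real.sqrt 2 : ℂ)⁻¹ • !![1, 1; 0, 0]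

/-- `Q = (1/√2)·[[0,0],[1,-1]]` -/
def matQ : Matrix (Fin 2) (Fin 2) ℂ := (Real.sqrt 2 : ℂ)⁻¹ • !![0, 0; 1, -1]

/-- The alternating block product `Q^{w_1} P^{w_2} Q^{w_3} ⋯ P^{w_{2γ}} Q^{w_{2γ+1}}`
(the block with 0-based index `i` is a power of `Q` if `i` is even, of `P` if `i` is odd). -/
local notation "c" => ((Real.sqrt 2 : ℂ)⁻¹)
lemma QQ : matQ * matQ = (-c) • matQ := by
  ext i j
  fin_cases i <;> fin_cases j <;> simp [matQ, Matrix.mul_apply, Fin.sum_univ_two]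
lemma PP : matP * matP = c • matP := by
  ext i j
  fin_cases i <;> fin_cases j <;> simp [matP, Matrix.mul_apply, Fin.sum_univ_two]
lemma QPQ : matQ * matP * matQ = (c * c) • matQ := by
  ext i j
  fin_cases i <;> fin_cases j <;> simp [matP, matQ, Matrix.mul_apply, Fin.sum_univ_two]
lemma Qpow (k : ℕ) : matQ ^ (k + 1) = (-c) ^ k • matQ := by
  induction k with
  | zero => simp
  | succ k ih => rw [pow_succ, ih, smul_mul_assoc, QQ, smul_smul, ← pow_succ]
lemma Ppow (k : ℕ) : matP ^ (k + 1) = c ^ k • matP := by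
  induction k with
  | zero => simp
  | succ k ih => rw [pow_succ, ih, smul_mul_assoc, PP, smul_smul, ← pow_succ]

lemma key0 (w : Fin 3 → ℕ) (hw : ∀ i, 1 ≤ w i) :
    (List.ofFn (fun i : Fin 3 => (if i.val % 2 = 0 then matQ else matP) ^ (w i))).prod
    = (c ^ ((∑ i, w i) - 1) * (-1:ℂ) ^ ((∑ i, if i.val % 2 = 0 then w i else 0) + 0)) • matQ := by
  obtain ⟨a, ha⟩ := Nat.exists_eq_add_of_le' (hw 0)
  obtain ⟨b, hb⟩ := Nat.exists_eq_add_of_le' (hw 1)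
  obtain ⟨e, he⟩ := Nat.exists_eq_add_of_le' (hw 2)
  simp only [List.ofFn_succ, List.ofFn_zero, List.prod_cons, List.prod_nil, mul_one,
    Fin.sum_univ_three]
  norm_num
  rw [ha, hb, he, Qpow, Ppow, Qpow]
  simp only [smul_mul_assoc, mul_smul_comm, smul_smul, ← mul_assoc, QPQ]
  congr 1
  have h1 : a + 1 + (b + 1) + (e + 1) - 1 = a + b + e + 2 := by omega
  rw [h1, ← inv_pow]
  simp only [pow_add, pow_succ, pow_zero, neg_pow ((Real.sqrt 2:ℂ)⁻¹), neg_pow (-1:ℂ)]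
  ring

lemma key : ∀ (γ : ℕ) (w : Fin (2*γ+3) → ℕ), (∀ i, 1 ≤ w i) →
    (List.ofFn (fun i : Fin (2*γ+3) => (if i.val % 2 = 0 then matQ else matP) ^ (w i))).prod
    = (c ^ ((∑ i, w i) - 1) * (-1:ℂ) ^ ((∑ i, if i.val % 2 = 0 then w i else 0) + γ)) • matQ := by
  intro γ
  induction γ with
  | zero =>
    intro w hw
    exact key0 w hw
  | succ γ ih =>
    intro w hw
    rw [List.ofFn_succ', List.prod_concat, List.ofFn_succ', List.prod_concat]
    simp only [Fin.coe_castSucc, Fin.val_last]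
    have h1 : ¬((2*(γ+1)+1) % 2 = 0) := by omega
    have h2 : (2*(γ+1)+2) % 2 = 0 := by omega
    rw [if_neg h1, if_pos h2]
    obtain ⟨a, ha⟩ := Nat.exists_eq_add_of_le' (hw ((Fin.last (2*(γ+1)+1)).castSucc))
    obtain ⟨b, hb⟩ := Nat.exists_eq_add_of_le' (hw (Fin.last (2*(γ+1)+2)))
    rw [ha, hb, Ppow, Qpow]
    have ih' : (List.ofFn fun i : Fin (2*(γ+1)+1) =>
          (if (i : ℕ) % 2 = 0 then matQ else matP) ^ w (i.castSucc.castSucc)).prod =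
        (((Real.sqrt 2:ℂ)⁻¹) ^ ((∑ i : Fin (2*(γ+1)+1), w (i.castSucc.castSucc)) - 1) *
            (-1:ℂ) ^ ((∑ i : Fin (2*(γ+1)+1), if (i : ℕ) % 2 = 0 then w (i.castSucc.castSucc) else 0) + γ)) • matQ :=
      ih (fun i => w i.castSucc.castSucc) (fun i => hw _)
    rw [ih']
    have hs1 : ∑ i : Fin (2*(γ+1)+3), w i
        = (∑ i : Fin (2*(γ+1)+1), w (i.castSucc.castSucc))
          + w ((Fin.last (2*(γ+1)+1)).castSucc) + w (Fin.last (2*(γ+1)+2)) := by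
      rw [Fin.sum_univ_castSucc, Fin.sum_univ_castSucc]
    have hs2 : (∑ i : Fin (2*(γ+1)+3), if (i : ℕ) % 2 = 0 then w i else 0)
        = (∑ i : Fin (2*(γ+1)+1), if (i : ℕ) % 2 = 0 then w (i.castSucc.castSucc) else 0)
          + w (Fin.last (2*(γ+1)+2)) := by
      rw [Fin.sum_univ_castSucc, Fin.sum_univ_castSucc]
      simp only [Fin.coe_castSucc, Fin.val_last, if_neg h1, if_pos h2]
      omega
    rw [hs1, hs2, ha, hb]
    have hS : 1 ≤ ∑ i : Fin (2*(γ+1)+1), w (i.castSucc.castSucc) :=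
      le_trans (hw _) (Finset.single_le_sum (f := fun i : Fin (2*(γ+1)+1) => w (i.castSucc.castSucc))
        (fun i _ => Nat.zero_le _) (Finset.mem_univ 0))
    obtain ⟨s0, hs0⟩ := Nat.exists_eq_add_of_le' hS
    rw [hs0]
    simp only [smul_mul_assoc, mul_smul_comm, smul_smul, ← mul_assoc, QPQ]
    congr 1
    have e1 : s0 + 1 - 1 = s0 := by omega
    have e2 : s0 + 1 + (a + 1) + (b + 1) - 1 = s0 + a + b + 2 := by omega
    rw [e1, e2]
    simp only [pow_add, pow_succ, pow_zero, neg_pow ((Real.sqrt 2:ℂ)⁻¹), neg_pow (-1:ℂ)]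
    ring

theorem alternating_block_product_Q (γ l m : ℕ) (hγ : 1 ≤ γ) (hl : 1 ≤ l) (hm : 2 ≤ m)
    (w : Fin (2 * γ + 1) → ℕ) (hw : ∀ i, 1 ≤ w i)
    (hP : ∑ i ∈ Finset.univ.filter (fun i : Fin (2 * γ + 1) => i.val % 2 = 1), w i = l)
    (hQ : ∑ i ∈ Finset.univ.filter (fun i : Fin (2 * γ + 1) => i.val % 2 = 0), w i = m) :
    (List.ofFn (fun i : Fin (2 * γ + 1) =>
        (if i.val % 2 = 0 then matQ else matP) ^ (w i))).prod
    = ((Real.sqrt 2 : ℂ)⁻¹ ^ (l + m - 1) * (-1 : ℂ) ^ (m + γ + 1)) • matQ := by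
  obtain _ | γ' := γ
  · omega
  have hfilter : (Finset.univ.filter (fun i : Fin (2 * (γ' + 1) + 1) => ¬ i.val % 2 = 0))
      = (Finset.univ.filter (fun i : Fin (2 * (γ' + 1) + 1) => i.val % 2 = 1)) := by
    apply Finset.filter_congr
    intro i _
    constructor <;> intro h <;> omega
  have hsum : (∑ i : Fin (2 * (γ' + 1) + 1), w i) = l + m := by
    rw [← Finset.sum_filter_add_sum_filter_not Finset.univ
      (fun i : Fin (2 * (γ' + 1) + 1) => i.val % 2 = 0) w, hfilter, hP, hQ, Nat.add_comm]
  have hm' : (∑ i : Fin (2 * (γ' + 1) + 1), if i.val % 2 = 0 then w i else 0) = m := by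
    rw [← Finset.sum_filter, hQ]
  have hk : (List.ofFn (fun i : Fin (2 * (γ' + 1) + 1) =>
        (if i.val % 2 = 0 then matQ else matP) ^ (w i))).prod
      = (c ^ ((∑ i : Fin (2 * (γ' + 1) + 1), w i) - 1) *
          (-1 : ℂ) ^ ((∑ i : Fin (2 * (γ' + 1) + 1), if i.val % 2 = 0 then w i else 0) + γ')) • matQ :=
    key γ' w hw
  rw [hk, hsum, hm']
  congr 1
  have e : m + (γ' + 1) + 1 = (m + γ') + 2 := by omega
  rw [e, pow_add, pow_add, pow_add]
  norm_num
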